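/- The convolution (under subtraction/addition of coordinates) of two integer measures supported in B̄(0,λ) is an integer measure supported in B̄(0,2λ). -/

import Mathlib

set_option maxHeartbeats 1000000

open MeasureTheory Polynomial Filter

noncomputable def rootsC (p : Polynomial ℤ) : Multiset ℂ :=
  (p.map (Int.castRingHom ℂ)).roots

noncomputable def Delta (p : Polynomial ℤ) : Measure ℂ :=
  (p.natDegree : ENNReal)⁻¹ • ((rootsC p).map (fun α => (Measure.dirac α))).sum

def WeakLim (μs : ℕ → Measure ℂ) (μ : Measure ℂ) : Prop :=
  ∀ f : BoundedContinuousFunction ℂ ℝ,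
    Tendsto (fun n => ∫ z, f z ∂(μs n)) atTop (nhds (∫ z, f z ∂μ))

def IsIntegerMeasure (μ : Measure ℂ) : Prop :=
  IsProbabilityMeasure μ ∧
    ∃ (p : ℕ → Polynomial ℤ) (l : ℝ),
      (∀ n, (p n).Monic) ∧
      (∀ n, ∀ α ∈ rootsC (p n), ‖α‖ ≤ l) ∧
      WeakLim (fun n => Delta (p n)) μ

section Aux
open scoped Classical

theorem exists_sum_poly (p q : Polynomial ℤ) (hp : p.Monic) (hq : q.Monic) :
    ∃ r : Polynomial ℤ, r.Monic ∧
      rootsC r = (rootsC p).bind (fun α => (rootsC q).map (fun β => α + β)) := by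
  classical
  set F : ℚ[X] := (p * q).map (Int.castRingHom ℚ) with hF
  have hFm : F.Monic := (hp.mul hq).map _
  let K := F.SplittingField
  have hFsplits : Splits (F.map (algebraMap ℚ K)) := SplittingField.splits F
  have hmapsZ : ∀ s : Polynomial ℤ, s.map (Int.castRingHom K) =
      (s.map (Int.castRingHom ℚ)).map (algebraMap ℚ K) := by
    intro s
    have h : (algebraMap ℚ K).comp (Int.castRingHom ℚ) = Int.castRingHom K := RingHom.ext_int _ _
    rw [Polynomial.map_map, h]
  have hsplit : ∀ s : Polynomial ℤ, s ∣ p * q →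
      (s.map (Int.castRingHom K)).Splits := by
    intro s hdvd
    rw [hmapsZ]
    refine Splits.of_dvd hFsplits (hFm.map _).ne_zero ?_
    exact Polynomial.map_dvd _ (Polynomial.map_dvd _ hdvd)
  have hpK : (p.map (Int.castRingHom K)).Splits := hsplit p ⟨q, rfl⟩
  have hqK : (q.map (Int.castRingHom K)).Splits := hsplit q ⟨p, mul_comm p q⟩
  set A : Multiset K := (p.map (Int.castRingHom K)).roots with hA
  set B : Multiset K := (q.map (Int.castRingHom K)).roots with hB
  set S : Multiset K := A.bind (fun a => B.map (fun b => a + b)) with hS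
  have hrootInt : ∀ (s : Polynomial ℤ), s.Monic → ∀ x ∈ (s.map (Int.castRingHom K)).roots,
      IsIntegral ℤ x := by
    intro s hs x hx
    refine ⟨s, hs, ?_⟩
    have := isRoot_of_mem_roots hx
    rwa [IsRoot, eval_map] at this
  have hSint : ∀ x ∈ S, IsIntegral ℤ x := by
    intro x hx
    rw [hS, Multiset.mem_bind] at hx
    obtain ⟨a, ha, hx⟩ := hx
    rw [Multiset.mem_map] at hx
    obtain ⟨b, hb, rfl⟩ := hx
    exact (hrootInt p hp a (hA ▸ ha)).add (hrootInt q hq b (hB ▸ hb))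
  set R : K[X] := (S.map (fun s => X - C s)).prod with hR
  have hRm : R.Monic := monic_multiset_prod_of_monic _ _ (fun s _ => monic_X_sub_C s)
  -- Galois invariance of coefficients
  have hinv : ∀ σ : K ≃ₐ[ℚ] K, ∀ n, σ (R.coeff n) = R.coeff n := by
    intro σ n
    have key : ∀ (s : Polynomial ℤ), (s.map (Int.castRingHom K)).Splits →
        ((s.map (Int.castRingHom K)).roots).map (σ : K → K)
          = (s.map (Int.castRingHom K)).roots := by
      intro s hsp
      have h1 : (s.map (Int.castRingHom K)).map (σ : K →+* K) = s.map (Int.castRingHom K) := by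
        have h : (σ : K →+* K).comp (Int.castRingHom K) = Int.castRingHom K := RingHom.ext_int _ _
        rw [Polynomial.map_map, h]
      have h2 := hsp.roots_map (σ : K →+* K)
      rw [h1] at h2
      exact h2.symm
    have hAinv : A.map (σ : K → K) = A := by rw [hA]; exact key p hpK
    have hBinv : B.map (σ : K → K) = B := by rw [hB]; exact key q hqK
    have hSinv : S.map (σ : K → K) = S := by
      calc S.map (σ : K → K)
          = A.bind (fun a => (B.map (fun b => a + b)).map (σ : K → K)) := by
            rw [hS, Multiset.map_bind]
        _ = A.bind (fun a => (B.map (σ : K → K)).map (fun b => σ a + b)) := by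
            congr 1; funext a; rw [Multiset.map_map, Multiset.map_map]
            exact Multiset.map_congr rfl (fun b _ => by simp)
        _ = A.bind (fun a => B.map (fun b => σ a + b)) := by rw [hBinv]
        _ = (A.map (σ : K → K)).bind (fun a => B.map (fun b => a + b)) := by
            rw [Multiset.bind_map]
        _ = S := by rw [hAinv, hS]
    have hRinv : R.map (σ : K →+* K) = R := by
      rw [hR, Polynomial.map_multiset_prod, Multiset.map_map]
      conv_rhs => rw [← hSinv, Multiset.map_map]
      congr 1
      exact Multiset.map_congr rfl (fun s _ => by simp)
    conv_rhs => rw [← hRinv]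
    rw [coeff_map]
    rfl
  haveI : Normal ℚ K := SplittingField.instNormal F
  haveI : IsGalois ℚ K := ⟨⟩
  have hfix : IntermediateField.fixedField (⊤ : Subgroup (K ≃ₐ[ℚ] K)) = ⊥ :=
    OrderIso.map_bot (@IsGalois.intermediateFieldEquivSubgroup ℚ _ K _ _ _ _).symm
  have hcoeffQ : ∀ n, ∃ y : ℚ, algebraMap ℚ K y = R.coeff n := by
    intro n
    have hmem : R.coeff n ∈ IntermediateField.fixedField (⊤ : Subgroup (K ≃ₐ[ℚ] K)) :=
      fun g => hinv g n
    rw [hfix, IntermediateField.mem_bot] at hmem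
    exact hmem
  have hlifts : R ∈ lifts (algebraMap (integralClosure ℤ K) K) := by
    rw [hR]
    refine multiset_prod_mem _ ?_
    intro a ha
    rw [Multiset.mem_map] at ha
    obtain ⟨s, hs, rfl⟩ := ha
    rw [Polynomial.mem_lifts]
    refine ⟨X - C ⟨s, hSint s hs⟩, ?_⟩
    rw [Polynomial.map_sub, map_X, map_C]
    rfl
  have hcoeffInt : ∀ n, IsIntegral ℤ (R.coeff n) := by
    intro n
    rw [lifts_iff_coeff_lifts] at hlifts
    obtain ⟨y, hy⟩ := hlifts n
    rw [← hy]
    exact y.2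
  have hliftZ : R ∈ lifts (Int.castRingHom K) := by
    rw [lifts_iff_coeff_lifts]
    intro n
    obtain ⟨y, hy⟩ := hcoeffQ n
    have hyint : IsIntegral ℤ y := by
      have : IsIntegral ℤ (algebraMap ℚ K y) := hy ▸ hcoeffInt n
      exact IsIntegral.tower_bot (algebraMap ℚ K).injective this
    obtain ⟨z, hz⟩ := IsIntegrallyClosed.isIntegral_iff.mp hyint
    refine ⟨z, ?_⟩
    rw [← hy, ← hz]
    have : (algebraMap ℚ K).comp (algebraMap ℤ ℚ) = Int.castRingHom K := RingHom.ext_int _ _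
    calc (Int.castRingHom K) z = ((algebraMap ℚ K).comp (algebraMap ℤ ℚ)) z := by rw [this]
      _ = algebraMap ℚ K (algebraMap ℤ ℚ z) := rfl
  obtain ⟨r, hr, _, hrm⟩ := lifts_and_degree_eq_and_monic hliftZ hRm
  refine ⟨r, hrm, ?_⟩
  -- embed K into ℂ
  haveI : Algebra.IsAlgebraic ℚ K := Algebra.IsAlgebraic.of_finite ℚ K
  let φ : K →ₐ[ℚ] ℂ := IsAlgClosed.lift
  have hmapφ : ∀ s : Polynomial ℤ, s.map (Int.castRingHom ℂ)
      = (s.map (Int.castRingHom K)).map (φ : K →+* ℂ) := by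
    intro s
    rw [Polynomial.map_map]
    have h : (φ : K →+* ℂ).comp (Int.castRingHom K) = Int.castRingHom ℂ := RingHom.ext_int _ _
    rw [h]
  have hrootsφ : ∀ (s : Polynomial ℤ), (s.map (Int.castRingHom K)).Splits →
      (s.map (Int.castRingHom ℂ)).roots = ((s.map (Int.castRingHom K)).roots).map (φ : K → ℂ) := by
    intro s hsp
    rw [hmapφ s]
    exact hsp.roots_map (φ : K →+* ℂ)
  have hRC : r.map (Int.castRingHom ℂ) = ((S.map (φ : K → ℂ)).map (fun s => X - C s)).prod := by
    rw [hmapφ r, hr, hR, Polynomial.map_multiset_prod, Multiset.map_map, Multiset.map_map]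
    congr 1
    exact Multiset.map_congr rfl (fun s _ => by simp)
  have : rootsC r = S.map (φ : K → ℂ) := by
    rw [rootsC, hRC, roots_multiset_prod_X_sub_C]
  rw [this, rootsC, rootsC, hrootsφ p hpK, hrootsφ q hqK, ← hA, ← hB, hS]
  calc (A.bind fun a => B.map (fun b => a + b)).map (φ : K → ℂ)
      = A.bind (fun a => (B.map (fun b => a + b)).map (φ : K → ℂ)) := Multiset.map_bind _ _ _
    _ = A.bind (fun a => (B.map (φ : K → ℂ)).map (fun b => φ a + b)) := by
        congr 1; funext a; rw [Multiset.map_map, Multiset.map_map]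
        exact Multiset.map_congr rfl (fun b _ => by simp)
    _ = (A.map (φ : K → ℂ)).bind (fun α => (B.map (φ : K → ℂ)).map (fun β => α + β)) := by
        rw [Multiset.bind_map]

lemma msum_finite (m : Multiset ℂ) : IsFiniteMeasure ((m.map (fun α => Measure.dirac α)).sum) := by
  induction m using Multiset.induction_on with
  | empty => simp only [Multiset.map_zero, Multiset.sum_zero]; infer_instance
  | cons a m ih =>
    rw [Multiset.map_cons, Multiset.sum_cons]
    haveI := ih
    infer_instance

lemma msum_apply (m : Multiset ℂ) (s : Set ℂ) (hs : MeasurableSet s) :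
    ((m.map (fun α => Measure.dirac α)).sum) s = (m.map (fun a => s.indicator (fun _ => (1:ENNReal)) a)).sum := by
  induction m using Multiset.induction_on with
  | empty => simp
  | cons a m ih =>
    rw [Multiset.map_cons, Multiset.sum_cons, Multiset.map_cons, Multiset.sum_cons,
      Measure.add_apply, ih, Measure.dirac_apply' _ hs]
    congr 1

lemma msum_univ (m : Multiset ℂ) :
    ((m.map (fun α => Measure.dirac α)).sum) Set.univ = Multiset.card m := by
  rw [msum_apply _ _ MeasurableSet.univ]
  simp [Set.indicator_univ]

lemma card_rootsC (p : Polynomial ℤ) (hp : p.Monic) : Multiset.card (rootsC p) = p.natDegree := by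
  have hm : (p.map (Int.castRingHom ℂ)).Monic := hp.map _
  have hs : (p.map (Int.castRingHom ℂ)).Splits := IsAlgClosed.splits _
  rw [rootsC, (splits_iff_card_roots).mp hs, hp.natDegree_map]

lemma Delta_prob (p : Polynomial ℤ) (hp : p.Monic) (hd : p.natDegree ≠ 0) :
    IsProbabilityMeasure (Delta p) := by
  constructor
  rw [Delta, Measure.smul_apply, msum_univ, card_rootsC p hp, smul_eq_mul]
  rw [ENNReal.inv_mul_cancel]
  · exact_mod_cast hd
  · exact ENNReal.natCast_ne_top _

lemma Delta_supp (p : Polynomial ℤ) (l : ℝ) (hb : ∀ α ∈ rootsC p, ‖α‖ ≤ l) :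
    Delta p (Metric.closedBall 0 l)ᶜ = 0 := by
  rw [Delta, Measure.smul_apply,
    msum_apply _ _ (measurableSet_closedBall.compl)]
  have hthis : ∀ a ∈ rootsC p, ((Metric.closedBall (0:ℂ) l)ᶜ).indicator (fun _ => (1:ENNReal)) a
      = (fun _ => (0:ENNReal)) a := by
    intro a ha
    have hmem : a ∈ Metric.closedBall (0:ℂ) l := by
      rw [Metric.mem_closedBall, dist_zero_right]
      simpa using hb a ha
    simp [Set.indicator_of_notMem, hmem]
  rw [Multiset.map_congr rfl hthis]
  simp

lemma smul_prod_smul (μ ν : Measure ℂ) [SFinite μ] [SFinite ν] (c d : ENNReal) (hd : d ≠ ⊤) :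
    (c • μ).prod (d • ν) = (c * d) • (μ.prod ν) := by
  ext s hs
  rw [Measure.smul_apply, Measure.prod_apply hs, Measure.prod_apply hs,
    lintegral_smul_measure]
  simp only [Measure.smul_apply, smul_eq_mul]
  rw [lintegral_const_mul' _ _ hd, ← mul_assoc]

lemma prod_msum_right (ρ : Measure ℂ) [SFinite ρ] (k : Multiset ℂ) :
    ρ.prod ((k.map (fun α => Measure.dirac α)).sum)
      = (k.map (fun b => ρ.prod (Measure.dirac b))).sum := by
  induction k using Multiset.induction_on with
  | empty => simp [Measure.prod_zero]
  | cons a k ih =>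
    haveI := msum_finite k
    rw [Multiset.map_cons, Multiset.sum_cons, Measure.prod_add, ih, Multiset.map_cons,
      Multiset.sum_cons]

lemma msum_prod_msum (m k : Multiset ℂ) :
    ((m.map (fun α => Measure.dirac α)).sum).prod ((k.map (fun α => Measure.dirac α)).sum)
      = (((m.bind (fun a => k.map (fun b => ((a, b) : ℂ × ℂ))))).map
          (fun w => Measure.dirac w)).sum := by
  induction m using Multiset.induction_on with
  | empty => simp [Measure.zero_prod]
  | cons a m ih =>
    haveI := msum_finite m
    haveI := msum_finite k
    rw [Multiset.map_cons, Multiset.sum_cons, Measure.add_prod, ih, Multiset.cons_bind,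
      Multiset.map_add, Multiset.sum_add, prod_msum_right]
    have hmm : (Multiset.map (fun b => (Measure.dirac a).prod (Measure.dirac b)) k)
        = (Multiset.map (fun w => Measure.dirac w) (Multiset.map (fun b => ((a, b) : ℂ × ℂ)) k)) := by
      rw [Multiset.map_map]
      exact Multiset.map_congr rfl (fun b _ => Measure.dirac_prod_dirac)
    rw [hmm]

lemma map_msum (M : Multiset (Measure (ℂ × ℂ))) {f : ℂ × ℂ → ℂ} (hf : Measurable f) :
    (M.sum).map f = (M.map (fun σ => σ.map f)).sum := by
  induction M using Multiset.induction_on with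
  | empty => simp
  | cons σ M ih =>
    rw [Multiset.sum_cons, Measure.map_add _ _ hf, ih, Multiset.map_cons, Multiset.sum_cons]

lemma Delta_conv (p q r : Polynomial ℤ) (hp : p.Monic) (hq : q.Monic)
    (hdp : p.natDegree ≠ 0) (hdq : q.natDegree ≠ 0) (hr : r.Monic)
    (hroots : rootsC r = (rootsC p).bind (fun α => (rootsC q).map (fun β => α + β))) :
    ((Delta p).prod (Delta q)).map (fun x : ℂ × ℂ => x.1 + x.2) = Delta r := by
  haveI := msum_finite (rootsC p)
  haveI := msum_finite (rootsC q)
  have hmeas : Measurable (fun x : ℂ × ℂ => x.1 + x.2) := measurable_fst.add measurable_snd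
  rw [Delta, Delta, smul_prod_smul _ _ _ _ (ENNReal.inv_ne_top.mpr (by exact_mod_cast hdq)),
    Measure.map_smul, msum_prod_msum, map_msum _ hmeas]
  rw [Delta, hroots]
  have hdr : r.natDegree = p.natDegree * q.natDegree := by
    rw [← card_rootsC r hr, hroots, ← card_rootsC p hp, ← card_rootsC q hq,
      Multiset.card_bind]
    simp [Multiset.card_map, Function.comp]
  congr 1
  · rw [hdr, Nat.cast_mul, ENNReal.mul_inv (Or.inl (by exact_mod_cast hdp))
      (Or.inl (ENNReal.natCast_ne_top _))]
  · refine congrArg Multiset.sum ?_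
    rw [Multiset.map_map]
    refine (Multiset.map_bind _ _ _).trans (Eq.trans ?_ (Multiset.map_bind _ _ _).symm)
    refine congrArg (Multiset.bind (rootsC p)) (funext fun a => ?_)
    rw [Multiset.map_map, Multiset.map_map]
    exact Multiset.map_congr rfl (fun b _ => by
      show Measure.map _ (Measure.dirac ((a, b) : ℂ × ℂ)) = Measure.dirac (a + b)
      exact Measure.map_dirac' hmeas _)

lemma prodsupp (ρ τ : Measure ℂ) [SFinite ρ] [SFinite τ] (s t : Set ℂ)
    (hρ : ρ sᶜ = 0) (hτ : τ tᶜ = 0) : (ρ.prod τ) (s ×ˢ t)ᶜ = 0 := by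
  have hsub : (s ×ˢ t)ᶜ ⊆ (sᶜ ×ˢ (Set.univ : Set ℂ)) ∪ ((Set.univ : Set ℂ) ×ˢ tᶜ) := by
    intro w hw
    simp only [Set.mem_compl_iff, Set.mem_prod, not_and_or] at hw
    simp only [Set.mem_union, Set.mem_prod, Set.mem_univ, Set.mem_compl_iff, and_true, true_and]
    tauto
  refine measure_mono_null hsub (measure_union_null ?_ ?_) <;>
    rw [Measure.prod_prod] <;> simp [hρ, hτ]

lemma cont_integrable (σ : Measure (ℂ × ℂ)) [IsProbabilityMeasure σ] (KS : Set (ℂ × ℂ))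
    (hKc : IsCompact KS) (hσ : σ KSᶜ = 0) (a : C(ℂ × ℂ, ℝ)) : Integrable a σ := by
  obtain ⟨C, hC⟩ := hKc.exists_bound_of_continuousOn a.continuous.continuousOn
  have hae : ∀ᵐ w ∂σ, w ∈ KS := by
    rw [MeasureTheory.ae_iff]
    exact hσ
  refine Integrable.mono' (integrable_const C) a.continuous.aestronglyMeasurable ?_
  filter_upwards [hae] with w hw
  exact hC w hw

theorem core (L : ℝ) (hL : 0 ≤ L)
    (μs νs : ℕ → Measure ℂ) (μ ν : Measure ℂ)
    [IsProbabilityMeasure μ] [IsProbabilityMeasure ν]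
    (hμsP : ∀ n, IsProbabilityMeasure (μs n)) (hνsP : ∀ n, IsProbabilityMeasure (νs n))
    (hμsK : ∀ n, μs n (Metric.closedBall 0 L)ᶜ = 0) (hνsK : ∀ n, νs n (Metric.closedBall 0 L)ᶜ = 0)
    (hμK : μ (Metric.closedBall 0 L)ᶜ = 0) (hνK : ν (Metric.closedBall 0 L)ᶜ = 0)
    (hμw : WeakLim μs μ) (hνw : WeakLim νs ν)
    (g : BoundedContinuousFunction (ℂ × ℂ) ℝ) :
    Tendsto (fun n => ∫ w, g w ∂((μs n).prod (νs n))) atTop (nhds (∫ w, g w ∂(μ.prod ν))) := by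
  classical
  set B : Set ℂ := Metric.closedBall 0 L with hB
  set K2 : Set (ℂ × ℂ) := B ×ˢ B with hK2
  have hK2c : IsCompact K2 := (isCompact_closedBall _ _).prod (isCompact_closedBall _ _)
  haveI : CompactSpace K2 := isCompact_iff_compactSpace.mp hK2c
  -- support facts
  have hsuppn : ∀ n, ((μs n).prod (νs n)) K2ᶜ = 0 := by
    intro n
    haveI := hμsP n; haveI := hνsP n
    exact prodsupp _ _ _ _ (hμsK n) (hνsK n)
  have hsupp : (μ.prod ν) K2ᶜ = 0 := prodsupp _ _ _ _ hμK hνK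
  haveI : ∀ n, IsProbabilityMeasure ((μs n).prod (νs n)) := by
    intro n; haveI := hμsP n; haveI := hνsP n; infer_instance
  -- the submodule of good limits
  let PS : Submodule ℝ C(ℂ × ℂ, ℝ) :=
  { carrier := {a | Tendsto (fun n => ∫ w, a w ∂((μs n).prod (νs n))) atTop
      (nhds (∫ w, a w ∂(μ.prod ν)))}
    add_mem' := by
      intro a b ha hb
      simp only [Set.mem_setOf_eq, ContinuousMap.coe_add, Pi.add_apply] at *
      have hint : ∀ n, ∫ w, (a w + b w) ∂((μs n).prod (νs n))
          = (∫ w, a w ∂((μs n).prod (νs n))) + ∫ w, b w ∂((μs n).prod (νs n)) := by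
        intro n
        exact integral_add (cont_integrable _ _ hK2c (hsuppn n) a)
          (cont_integrable _ _ hK2c (hsuppn n) b)
      rw [show (fun n => ∫ w, (a w + b w) ∂((μs n).prod (νs n)))
          = (fun n => (∫ w, a w ∂((μs n).prod (νs n))) + ∫ w, b w ∂((μs n).prod (νs n)))
          from funext hint,
        integral_add (cont_integrable _ _ hK2c hsupp a) (cont_integrable _ _ hK2c hsupp b)]
      exact ha.add hb
    zero_mem' := by
      simp only [Set.mem_setOf_eq, ContinuousMap.coe_zero, Pi.zero_apply, integral_zero]
      exact tendsto_const_nhds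
    smul_mem' := by
      intro c a ha
      simp only [Set.mem_setOf_eq, ContinuousMap.coe_smul, Pi.smul_apply, smul_eq_mul] at *
      simp only [integral_const_mul]
      exact ha.const_mul c }
  -- products of single-variable functions are good
  have hgood : ∀ (u v : BoundedContinuousFunction ℂ ℝ),
      (⟨fun w : ℂ × ℂ => u w.1 * v w.2, by continuity⟩ : C(ℂ × ℂ, ℝ)) ∈ PS := by
    intro u v
    have hprod : ∀ (ρ τ : Measure ℂ) [SigmaFinite ρ] [SigmaFinite τ],
        ∫ w : ℂ × ℂ, u w.1 * v w.2 ∂(ρ.prod τ) = (∫ z, u z ∂ρ) * (∫ z, v z ∂τ) := by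
      intro ρ τ _ _
      exact integral_prod_mul (fun z => u z) (fun z => v z)
    show Tendsto _ atTop _
    simp only [ContinuousMap.coe_mk]
    have heq : ∀ n, ∫ w : ℂ × ℂ, u w.1 * v w.2 ∂((μs n).prod (νs n))
        = (∫ z, u z ∂(μs n)) * (∫ z, v z ∂(νs n)) := by
      intro n
      haveI := hμsP n; haveI := hνsP n
      exact hprod _ _
    rw [funext heq, hprod μ ν]
    exact (hμw u).mul (hνw v)
  -- generators
  let Gen : Set C(ℂ × ℂ, ℝ) :=
    {a | ∃ u : BoundedContinuousFunction ℂ ℝ, ∀ w : ℂ × ℂ, a w = u w.1} ∪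
    {a | ∃ v : BoundedContinuousFunction ℂ ℝ, ∀ w : ℂ × ℂ, a w = v w.2}
  -- the multiplicative set
  let M : Submonoid C(ℂ × ℂ, ℝ) :=
  { carrier := {a | ∃ u v : BoundedContinuousFunction ℂ ℝ, ∀ w : ℂ × ℂ, a w = u w.1 * v w.2}
    one_mem' := ⟨1, 1, fun w => by simp⟩
    mul_mem' := by
      rintro a b ⟨u1, v1, h1⟩ ⟨u2, v2, h2⟩
      refine ⟨u1 * u2, v1 * v2, fun w => ?_⟩
      simp only [ContinuousMap.mul_apply, h1 w, h2 w,
        BoundedContinuousFunction.coe_mul, Pi.mul_apply]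
      ring }
  have hGenM : Gen ⊆ (M : Set C(ℂ × ℂ, ℝ)) := by
    rintro a (⟨u, hu⟩ | ⟨v, hv⟩)
    · exact ⟨u, 1, fun w => by simp [hu w]⟩
    · exact ⟨1, v, fun w => by simp [hv w]⟩
  have hMPS : (M : Set C(ℂ × ℂ, ℝ)) ⊆ (PS : Set C(ℂ × ℂ, ℝ)) := by
    rintro a ⟨u, v, h⟩
    have : a = (⟨fun w : ℂ × ℂ => u w.1 * v w.2, by continuity⟩ : C(ℂ × ℂ, ℝ)) := by
      ext w; exact h w
    rw [this]
    exact hgood u v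
  have hadj : ∀ a ∈ Algebra.adjoin ℝ Gen, a ∈ PS := by
    intro a ha
    have h1 : a ∈ Submodule.span ℝ (Submonoid.closure Gen : Set C(ℂ × ℂ, ℝ)) := by
      rw [← Algebra.adjoin_eq_span]
      exact ha
    refine Submodule.span_le.mpr ?_ h1
    intro b hb
    have hbM : b ∈ M := Submonoid.closure_le.mpr hGenM hb
    exact hMPS hbM
  -- restriction algebra hom
  let inc : C(K2, ℂ × ℂ) := ⟨Subtype.val, continuous_subtype_val⟩
  let res : C(ℂ × ℂ, ℝ) →ₐ[ℝ] C(K2, ℝ) := ContinuousMap.compRightAlgHom ℝ ℝ inc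
  let Abar : Subalgebra ℝ C(K2, ℝ) := (Algebra.adjoin ℝ Gen).map res
  have hsep : Abar.SeparatesPoints := by
    intro x y hxy
    have hval : (x : ℂ × ℂ) ≠ (y : ℂ × ℂ) := fun h => hxy (Subtype.ext h)
    have hcoord : (x : ℂ × ℂ).1 ≠ (y : ℂ × ℂ).1 ∨ (x : ℂ × ℂ).2 ≠ (y : ℂ × ℂ).2 := by
      by_contra h
      push_neg at h
      exact hval (Prod.ext h.1 h.2)
    -- bounded continuous separating function on ℂ
    have hu : ∀ z1 z2 : ℂ, z1 ≠ z2 → ∃ u : BoundedContinuousFunction ℂ ℝ, u z1 ≠ u z2 := by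
      intro z1 z2 hz
      refine ⟨BoundedContinuousFunction.mkOfBound
        ⟨fun z => min (dist z z1) 1, by continuity⟩ 2 ?_, ?_⟩
      · intro z w
        simp only [ContinuousMap.coe_mk]
        rw [Real.dist_eq]
        have h1 : (0:ℝ) ≤ min (dist z z1) 1 := le_min dist_nonneg zero_le_one
        have h2 : min (dist z z1) 1 ≤ 1 := min_le_right _ _
        have h3 : (0:ℝ) ≤ min (dist w z1) 1 := le_min dist_nonneg zero_le_one
        have h4 : min (dist w z1) 1 ≤ 1 := min_le_right _ _
        rw [abs_le]
        constructor <;> linarith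
      · show (min (dist z1 z1) 1) ≠ (min (dist z2 z1) 1)
        rw [dist_self, min_eq_left zero_le_one]
        exact ne_of_lt (lt_min (dist_pos.mpr (Ne.symm hz)) one_pos)
    have hpick : ∃ a : C(ℂ × ℂ, ℝ), a ∈ Gen ∧ a (x : ℂ × ℂ) ≠ a (y : ℂ × ℂ) := by
      rcases hcoord with h | h
      · obtain ⟨u, hu'⟩ := hu _ _ h
        exact ⟨(u.toContinuousMap).comp ⟨Prod.fst, continuous_fst⟩,
          Or.inl ⟨u, fun w => rfl⟩, hu'⟩
      · obtain ⟨v, hv'⟩ := hu _ _ h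
        exact ⟨(v.toContinuousMap).comp ⟨Prod.snd, continuous_snd⟩,
          Or.inr ⟨v, fun w => rfl⟩, hv'⟩
    obtain ⟨a, haGen, hane⟩ := hpick
    refine ⟨res a, ⟨res a, Subalgebra.mem_map.mpr ⟨a, Algebra.subset_adjoin haGen, rfl⟩, rfl⟩, ?_⟩
    exact hane
  -- Stone-Weierstrass
  have htop := ContinuousMap.subalgebra_topologicalClosure_eq_top_of_separatesPoints Abar hsep
  have hclos : ∀ gK : C(K2, ℝ), gK ∈ closure (Abar : Set C(K2, ℝ)) := by
    intro gK
    have h1 : gK ∈ Abar.topologicalClosure := htop ▸ Algebra.mem_top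
    exact h1
  let gK : C(K2, ℝ) := res g.toContinuousMap
  rw [Metric.tendsto_atTop]
  intro ε hε
  have hε4 : 0 < ε / 4 := by linarith
  obtain ⟨b, hbA, hbd⟩ := Metric.mem_closure_iff.mp (hclos gK) (ε / 4) hε4
  obtain ⟨a, haAdj, rfl⟩ := hbA
  have haPS : a ∈ PS := hadj a haAdj
  have hbound : ∀ w ∈ K2, |g w - a w| ≤ ε / 4 := by
    intro w hw
    have h1 : dist (gK ⟨w, hw⟩) ((res a) ⟨w, hw⟩) ≤ dist gK (res a) :=
      ContinuousMap.dist_apply_le_dist _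
    have h2 : dist (gK ⟨w, hw⟩) ((res a) ⟨w, hw⟩) = |g w - a w| := by
      rw [Real.dist_eq]
      rfl
    rw [h2] at h1
    exact h1.trans hbd.le
  have hIB : ∀ (σ : Measure (ℂ × ℂ)), IsProbabilityMeasure σ → σ K2ᶜ = 0 →
      |(∫ w, g w ∂σ) - ∫ w, a w ∂σ| ≤ ε / 4 := by
    intro σ hPσ hσ
    haveI := hPσ
    rw [← integral_sub (g.integrable σ) (cont_integrable _ _ hK2c hσ a)]
    have hb2 : ∀ᵐ w ∂σ, ‖g w - a w‖ ≤ ε / 4 := by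
      have hae : ∀ᵐ w ∂σ, w ∈ K2 := by
        rw [MeasureTheory.ae_iff]; exact hσ
      filter_upwards [hae] with w hw
      rw [Real.norm_eq_abs]
      exact hbound w hw
    calc |∫ w, (g w - a w) ∂σ| = ‖∫ w, (g w - a w) ∂σ‖ := (Real.norm_eq_abs _).symm
      _ ≤ ε / 4 * (σ Set.univ).toReal := norm_integral_le_of_norm_le_const hb2
      _ = ε / 4 := by simp
  obtain ⟨N, hN⟩ := Metric.tendsto_atTop.mp haPS (ε / 4) hε4
  refine ⟨N, fun n hn => ?_⟩
  have h1 := hIB ((μs n).prod (νs n)) (by infer_instance) (hsuppn n)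
  have h2 := hIB (μ.prod ν) (by infer_instance) hsupp
  have h3 : dist (∫ w, a w ∂((μs n).prod (νs n))) (∫ w, a w ∂(μ.prod ν)) < ε / 4 := hN n hn
  have e1 : dist (∫ w, g w ∂((μs n).prod (νs n))) (∫ w, a w ∂((μs n).prod (νs n))) ≤ ε / 4 := by
    rw [Real.dist_eq]; exact h1
  have e3 : dist (∫ w, a w ∂(μ.prod ν)) (∫ w, g w ∂(μ.prod ν)) ≤ ε / 4 := by
    rw [Real.dist_eq, abs_sub_comm]; exact h2
  have htri := dist_triangle4 (∫ w, g w ∂((μs n).prod (νs n)))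
    (∫ w, a w ∂((μs n).prod (νs n))) (∫ w, a w ∂(μ.prod ν)) (∫ w, g w ∂(μ.prod ν))
  linarith

lemma Delta_zero_of_deg_zero (p : Polynomial ℤ) (hp : p.Monic) (hd : p.natDegree = 0) :
    Delta p = 0 := by
  have h0 : rootsC p = 0 := by
    rw [← Multiset.card_eq_zero, card_rootsC p hp, hd]
  rw [Delta, h0]
  simp

lemma integral_one_Delta (p : Polynomial ℤ) (hp : p.Monic) :
    ∫ z, (1 : BoundedContinuousFunction ℂ ℝ) z ∂(Delta p)
      = if p.natDegree = 0 then 0 else 1 := by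
  by_cases hd : p.natDegree = 0
  · rw [Delta_zero_of_deg_zero p hp hd, if_pos hd]
    simp
  · rw [if_neg hd]
    haveI := Delta_prob p hp hd
    simp

lemma eventually_deg_ne_zero (p : ℕ → Polynomial ℤ) (hpm : ∀ n, (p n).Monic)
    (μ : Measure ℂ) [IsProbabilityMeasure μ]
    (hw : WeakLim (fun n => Delta (p n)) μ) :
    ∀ᶠ n in atTop, (p n).natDegree ≠ 0 := by
  have h1 := hw 1
  have h2 : ∫ z, (1 : BoundedContinuousFunction ℂ ℝ) z ∂μ = 1 := by simp
  rw [h2] at h1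
  obtain ⟨N, hN⟩ := Metric.tendsto_atTop.mp h1 (1/2) (by norm_num)
  refine eventually_atTop.mpr ⟨N, fun n hn hdeg => ?_⟩
  have := hN n hn
  rw [integral_one_Delta (p n) (hpm n), if_pos hdeg] at this
  rw [Real.dist_eq] at this
  norm_num at this

theorem stmt10 (μ ν : Measure ℂ) (l : ℝ) (hμ : IsIntegerMeasure μ) (hν : IsIntegerMeasure ν)
    (hμs : μ (Metric.closedBall 0 l)ᶜ = 0) (hνs : ν (Metric.closedBall 0 l)ᶜ = 0) :
    IsIntegerMeasure ((μ.prod ν).map (fun x : ℂ × ℂ => x.1 + x.2)) ∧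
      ((μ.prod ν).map (fun x : ℂ × ℂ => x.1 + x.2)) (Metric.closedBall 0 (2 * l))ᶜ = 0 := by
  classical
  obtain ⟨hμP, p0, l1, hp0m, hp0b, hp0w⟩ := hμ
  obtain ⟨hνP, q0, l2, hq0m, hq0b, hq0w⟩ := hν
  haveI := hμP
  haveI := hνP
  have hmeasadd : Measurable (fun x : ℂ × ℂ => x.1 + x.2) := measurable_fst.add measurable_snd
  have hl : 0 ≤ l := by
    by_contra hneg
    push_neg at hneg
    have hempty : Metric.closedBall (0:ℂ) l = ∅ := Metric.closedBall_eq_empty.mpr hneg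
    have : μ Set.univ = 0 := by
      rw [← Set.compl_empty, ← hempty]
      exact hμs
    simp [measure_univ] at this
  -- Part 2 : support
  have hpart2 : ((μ.prod ν).map (fun x : ℂ × ℂ => x.1 + x.2))
      (Metric.closedBall 0 (2 * l))ᶜ = 0 := by
    rw [Measure.map_apply hmeasadd measurableSet_closedBall.compl]
    refine measure_mono_null ?_
      (prodsupp μ ν (Metric.closedBall 0 l) (Metric.closedBall 0 l) hμs hνs)
    intro w hw
    simp only [Set.mem_preimage, Set.mem_compl_iff, Metric.mem_closedBall,
      dist_zero_right] at hw
    simp only [Set.mem_compl_iff, Set.mem_prod, Metric.mem_closedBall, dist_zero_right,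
      not_and_or]
    by_contra hcon
    push_neg at hcon
    obtain ⟨h1, h2⟩ := hcon
    exact hw ((norm_add_le w.1 w.2).trans (by linarith [h1, h2] : ‖w.1‖ + ‖w.2‖ ≤ 2 * l))
  -- fixed sequences
  set p : ℕ → Polynomial ℤ := fun n => if (p0 n).natDegree = 0 then X else p0 n with hpdef
  set q : ℕ → Polynomial ℤ := fun n => if (q0 n).natDegree = 0 then X else q0 n with hqdef
  have hpm : ∀ n, (p n).Monic := by
    intro n; rw [hpdef]; dsimp only; split
    · exact monic_X
    · exact hp0m n
  have hqm : ∀ n, (q n).Monic := by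
    intro n; rw [hqdef]; dsimp only; split
    · exact monic_X
    · exact hq0m n
  have hpd : ∀ n, (p n).natDegree ≠ 0 := by
    intro n; rw [hpdef]; dsimp only; split
    · rw [natDegree_X]; exact one_ne_zero
    · assumption
  have hqd : ∀ n, (q n).natDegree ≠ 0 := by
    intro n; rw [hqdef]; dsimp only; split
    · rw [natDegree_X]; exact one_ne_zero
    · assumption
  have hrootsX : rootsC X = {0} := by
    rw [rootsC, map_X, roots_X]
  have hpb : ∀ n, ∀ α ∈ rootsC (p n), ‖α‖ ≤ max l1 0 := by
    intro n α hα
    rw [hpdef] at hα; dsimp only at hα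
    by_cases hc : (p0 n).natDegree = 0
    · rw [if_pos hc, hrootsX] at hα
      rw [Multiset.mem_singleton] at hα
      subst hα
      simp
    · rw [if_neg hc] at hα
      exact (hp0b n α hα).trans (le_max_left _ _)
  have hqb : ∀ n, ∀ α ∈ rootsC (q n), ‖α‖ ≤ max l2 0 := by
    intro n α hα
    rw [hqdef] at hα; dsimp only at hα
    by_cases hc : (q0 n).natDegree = 0
    · rw [if_pos hc, hrootsX] at hα
      rw [Multiset.mem_singleton] at hα
      subst hα
      simp
    · rw [if_neg hc] at hα
      exact (hq0b n α hα).trans (le_max_left _ _)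
  have hpw : WeakLim (fun n => Delta (p n)) μ := by
    intro f
    refine (hp0w f).congr' ?_
    filter_upwards [eventually_deg_ne_zero p0 hp0m μ hp0w] with n hn
    rw [hpdef]; dsimp only; rw [if_neg hn]
  have hqw : WeakLim (fun n => Delta (q n)) ν := by
    intro f
    refine (hq0w f).congr' ?_
    filter_upwards [eventually_deg_ne_zero q0 hq0m ν hq0w] with n hn
    rw [hqdef]; dsimp only; rw [if_neg hn]
  -- the sum polynomials
  choose r hrm hroots using fun n => exists_sum_poly (p n) (q n) (hpm n) (hqm n)
  -- probability of the convolution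
  haveI hconvP : IsProbabilityMeasure ((μ.prod ν).map (fun x : ℂ × ℂ => x.1 + x.2)) :=
    Measure.isProbabilityMeasure_map hmeasadd.aemeasurable
  refine ⟨⟨hconvP, r, max l1 0 + max l2 0, hrm, ?_, ?_⟩, hpart2⟩
  · -- roots bound
    intro n α hα
    rw [hroots n, Multiset.mem_bind] at hα
    obtain ⟨a, ha, hα⟩ := hα
    rw [Multiset.mem_map] at hα
    obtain ⟨b, hb, rfl⟩ := hα
    calc ‖a + b‖ ≤ ‖a‖ + ‖b‖ := norm_add_le a b
      _ ≤ max l1 0 + max l2 0 := add_le_add (hpb n a ha) (hqb n b hb)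
  · -- weak convergence
    intro f
    set L : ℝ := max (max (max l1 0) (max l2 0)) l with hLdef
    have hL0 : 0 ≤ L := le_trans (le_max_right l1 0) ((le_max_left _ _).trans (le_max_left _ l))
    have hmono : ∀ c : ℝ, c ≤ L → ∀ (σ : Measure ℂ), σ (Metric.closedBall 0 c)ᶜ = 0 →
        σ (Metric.closedBall 0 L)ᶜ = 0 := by
      intro c hc σ hσ
      refine measure_mono_null ?_ hσ
      exact Set.compl_subset_compl.mpr (Metric.closedBall_subset_closedBall hc)
    have hcore := core L hL0 (fun n => Delta (p n)) (fun n => Delta (q n)) μ ν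
      (fun n => Delta_prob (p n) (hpm n) (hpd n))
      (fun n => Delta_prob (q n) (hqm n) (hqd n))
      (fun n => hmono (max l1 0) (le_trans (le_max_left (max l1 0) (max l2 0)) (le_max_left _ l)) _
        (Delta_supp (p n) (max l1 0) (hpb n)))
      (fun n => hmono (max l2 0) (le_trans (le_max_right (max l1 0) (max l2 0)) (le_max_left _ l)) _
        (Delta_supp (q n) (max l2 0) (hqb n)))
      (hmono l (le_max_right _ _) μ hμs)
      (hmono l (le_max_right _ _) ν hνs)
      hpw hqw
      (f.compContinuous (⟨fun w : ℂ × ℂ => w.1 + w.2, by continuity⟩ : C(ℂ × ℂ, ℂ)))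
    have heqn : ∀ n, ∫ z, f z ∂(Delta (r n))
        = ∫ w, (f.compContinuous (⟨fun w : ℂ × ℂ => w.1 + w.2, by continuity⟩ : C(ℂ × ℂ, ℂ))) w
            ∂((Delta (p n)).prod (Delta (q n))) := by
      intro n
      rw [← Delta_conv (p n) (q n) (r n) (hpm n) (hqm n) (hpd n) (hqd n) (hrm n) (hroots n)]
      rw [integral_map hmeasadd.aemeasurable f.continuous.measurable.aestronglyMeasurable]
      rfl
    have heqlim : ∫ z, f z ∂((μ.prod ν).map (fun x : ℂ × ℂ => x.1 + x.2))
        = ∫ w, (f.compContinuous (⟨fun w : ℂ × ℂ => w.1 + w.2, by continuity⟩ : C(ℂ × ℂ, ℂ))) w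
            ∂(μ.prod ν) := by
      rw [integral_map hmeasadd.aemeasurable f.continuous.measurable.aestronglyMeasurable]
      rfl
    rw [funext heqn, heqlim]
    exact hcore

end Aux
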